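/- Let σ be a permutation of [m] (viewed as a perfect matching F between two ordered sets of size m, pairing i with σ(i)). Define Φ(F) = a₁⋯a_m | b₁⋯b_m where a_i is the length of the longest planar matching of F using only pairs (i', σ(i')) with i' ≤ i and containing (i, σ(i)) as its last pair on the left side, and b_j is defined analogously on the right side. Then for any pair (i, σ(i)) of F and any k, we have a_i = k if and only if b_{σ(i)} = k. -/

import Mathlib

/-- `a_i`: the maximum size of a planar matching of the perfect matching given by
the permutation `σ` that uses only pairs `(i', σ i')` with `i' ≤ i` and contains
the pair `(i, σ i)`; a planar matching is a set of indices on which `σ` is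
strictly increasing. -/
def aVal (m : ℕ) (σ : Equiv.Perm (Fin m)) (i : Fin m) : ℕ :=
  (Finset.univ.filter (fun s : Finset (Fin m) =>
    i ∈ s ∧ (∀ x ∈ s, x ≤ i) ∧ ∀ x ∈ s, ∀ y ∈ s, x < y → σ x < σ y)).sup
    Finset.card

/-- `b_j`: the maximum size of a planar matching of `σ` using only pairs with
right endpoint at most `j` and containing the pair `(σ⁻¹ j, j)`. -/
def bVal (m : ℕ) (σ : Equiv.Perm (Fin m)) (j : Fin m) : ℕ :=
  aVal m σ⁻¹ j

/-- The quasi-configuration `φ(w)` of a representative walk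
`w = a₁⋯a_m | b₁⋯b_m`: for each level `k`, the initial segment of
`A_k = {i : a i = k}` of size `min |A_k| |B_k|` is matched in the crossing way
with the terminal segment of `B_k = {j : b j = k}` of the same size. A left
index `i` is paired with a right index `j` iff they are on the same level, the
rank of `i` from the start of `A_k` equals the rank of `j` from the end of
`B_k`, and this common rank is less than `min |A_k| |B_k|`. -/
def phiMatch (m : ℕ) (a b : Fin m → ℕ) : Set (Fin m × Fin m) :=
  {p : Fin m × Fin m |
    a p.1 = b p.2 ∧
    (Finset.univ.filter (fun i' : Fin m => a i' = a p.1 ∧ i' < p.1)).card =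
      (Finset.univ.filter (fun j' : Fin m => b j' = b p.2 ∧ p.2 < j')).card ∧
    (Finset.univ.filter (fun i' : Fin m => a i' = a p.1 ∧ i' < p.1)).card <
      min (Finset.univ.filter (fun i' : Fin m => a i' = a p.1)).card
        (Finset.univ.filter (fun j' : Fin m => b j' = b p.2)).card}

lemma aVal_le_aux (m : ℕ) (σ : Equiv.Perm (Fin m)) (i : Fin m) :
    aVal m σ i ≤ aVal m σ⁻¹ (σ i) := by
  apply Finset.sup_le
  intro s hs
  simp only [Finset.mem_filter, Finset.mem_univ, true_and] at hs
  obtain ⟨hi, hle, hmono⟩ := hs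
  have hmem : s.image σ ∈ Finset.univ.filter (fun t : Finset (Fin m) =>
      σ i ∈ t ∧ (∀ x ∈ t, x ≤ σ i) ∧ ∀ x ∈ t, ∀ y ∈ t, x < y → σ⁻¹ x < σ⁻¹ y) := by
    simp only [Finset.mem_filter, Finset.mem_univ, true_and]
    refine ⟨Finset.mem_image_of_mem σ hi, ?_, ?_⟩
    · intro y hy
      obtain ⟨x, hx, rfl⟩ := Finset.mem_image.mp hy
      rcases lt_or_eq_of_le (hle x hx) with h | h
      · exact le_of_lt (hmono x hx i hi h)
      · exact le_of_eq (congrArg σ h)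
    · intro y hy y' hy' hlt
      obtain ⟨x, hx, rfl⟩ := Finset.mem_image.mp hy
      obtain ⟨x', hx', rfl⟩ := Finset.mem_image.mp hy'
      simp only [Equiv.Perm.inv_def, Equiv.symm_apply_apply]
      rcases lt_trichotomy x x' with h | h | h
      · exact h
      · subst h; exact absurd hlt (lt_irrefl _)
      · exact absurd (hmono x' hx' x hx h) (not_lt.mpr hlt.le)
  have h := Finset.le_sup (f := Finset.card) hmem
  rwa [Finset.card_image_of_injective _ σ.injective] at h

/-- For every pair `(i, σ i)` of the perfect matching `F` determined by `σ`, and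
every `k`: `a_i = k` if and only if `b_{σ(i)} = k`, where `a, b` are the
longest-planar-matching profiles forming the walk `Φ(F)`. -/
theorem aVal_eq_iff_bVal_eq (m : ℕ) (σ : Equiv.Perm (Fin m)) (i : Fin m) (k : ℕ) :
    aVal m σ i = k ↔ bVal m σ (σ i) = k := by
  have key : aVal m σ i = aVal m σ⁻¹ (σ i) := by
    refine le_antisymm (aVal_le_aux m σ i) ?_
    have h := aVal_le_aux m σ⁻¹ (σ i)
    simpa using h
  unfold bVal
  rw [key]
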